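/- For standard Brownian motion B with B_0 = 0 and f_t the N(0,t) density, for any x ∈ ℝ and T > 0: E[(B_T − x)^+] = (−x)^+ + (1/2) ∫₀^T f_t(x) dt. -/

import Mathlib

open Real MeasureTheory ProbabilityTheory

open Filter Set Topology
open scoped ENNReal NNReal

/-- The centered Gaussian density with variance `t`. -/
noncomputable def gaussDensity (t y : ℝ) : ℝ :=
  Real.exp (-(y ^ 2) / (2 * t)) / Real.sqrt (2 * Real.pi * t)

/-- The standard Gaussian density. -/
noncomputable def stdGauss (u : ℝ) : ℝ :=
  Real.exp (-(u ^ 2) / 2) / Real.sqrt (2 * Real.pi)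

/-- The standard Gaussian tail function. -/
noncomputable def Psi (a : ℝ) : ℝ := ∫ u in Set.Ioi a, stdGauss u

lemma stdGauss_nonneg (u : ℝ) : 0 ≤ stdGauss u := by
  unfold stdGauss; positivity

lemma stdGauss_le (u : ℝ) : stdGauss u ≤ (Real.sqrt (2 * Real.pi))⁻¹ := by
  unfold stdGauss
  rw [← one_div]
  gcongr
  exact Real.exp_le_one_iff.mpr (by nlinarith [sq_nonneg u])

lemma continuous_stdGauss : Continuous stdGauss := by
  unfold stdGauss
  exact (Real.continuous_exp.comp (by continuity)).div_const _

lemma integrable_stdGauss : Integrable stdGauss := by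
  have h : stdGauss = fun u => Real.exp (-(2⁻¹ : ℝ) * u ^ 2) / Real.sqrt (2 * Real.pi) := by
    funext u; unfold stdGauss; ring_nf
  rw [h]
  exact (integrable_exp_neg_mul_sq (by norm_num)).div_const _

lemma integral_stdGauss : ∫ u, stdGauss u = 1 := by
  have h : stdGauss = fun u => Real.exp (-(2⁻¹ : ℝ) * u ^ 2) / Real.sqrt (2 * Real.pi) := by
    funext u; unfold stdGauss; ring_nf
  rw [h, integral_div, integral_gaussian]
  rw [div_eq_one_iff_eq (by positivity)]
  norm_num
  ring

lemma hasDerivAt_stdGauss (u : ℝ) : HasDerivAt stdGauss (-u * stdGauss u) u := by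
  have h1 : HasDerivAt (fun u : ℝ => -(u ^ 2) / 2) (-u) u := by
    have h := ((hasDerivAt_pow 2 u).neg).div_const 2
    refine h.congr_deriv ?_
    simp; ring
  have h2 := (h1.exp).div_const (Real.sqrt (2 * Real.pi))
  have h3 : -u * stdGauss u = Real.exp (-(u ^ 2) / 2) * -u / Real.sqrt (2 * Real.pi) := by
    unfold stdGauss; ring
  rw [h3]
  exact h2

lemma Psi_eq (a : ℝ) : Psi a = 1 - ∫ u in Set.Iic a, stdGauss u := by
  have h := MeasureTheory.integral_add_compl (measurableSet_Iic (a := a)) integrable_stdGauss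
  rw [compl_Iic] at h
  unfold Psi
  rw [← integral_stdGauss]
  linarith [h]

lemma hasDerivAt_Psi (a : ℝ) : HasDerivAt Psi (-stdGauss a) a := by
  have key : ∀ b : ℝ, Psi b = Psi 0 - ∫ u in (0:ℝ)..b, stdGauss u := by
    intro b
    rw [Psi_eq, Psi_eq,
      ← intervalIntegral.integral_Iic_sub_Iic integrable_stdGauss.integrableOn
        integrable_stdGauss.integrableOn]
    ring
  have hd : HasDerivAt (fun b => ∫ u in (0:ℝ)..b, stdGauss u) (stdGauss a) a :=
    intervalIntegral.integral_hasDerivAt_right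
      (integrable_stdGauss.intervalIntegrable)
      continuous_stdGauss.stronglyMeasurable.stronglyMeasurableAtFilter
      continuous_stdGauss.continuousAt
  have hd2 : HasDerivAt (fun b => Psi 0 - ∫ u in (0:ℝ)..b, stdGauss u) (-stdGauss a) a :=
    hd.const_sub _
  exact hd2.congr_of_eventuallyEq (Eventually.of_forall key)

lemma tendsto_Psi_atTop : Tendsto Psi atTop (𝓝 0) := by
  have key : ∀ a : ℝ, Psi a = ∫ u, Set.indicator (Set.Ioi a) stdGauss u := by
    intro a
    rw [integral_indicator measurableSet_Ioi]
    rfl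
  have h := MeasureTheory.tendsto_integral_filter_of_dominated_convergence
    (μ := volume) (l := (atTop : Filter ℝ))
    (F := fun a u => Set.indicator (Set.Ioi a) stdGauss u)
    (f := fun _ => (0 : ℝ)) (bound := stdGauss)
    (Eventually.of_forall fun a =>
      continuous_stdGauss.aestronglyMeasurable.indicator measurableSet_Ioi)
    (Eventually.of_forall fun a => ae_of_all _ fun u => by
      rw [Real.norm_eq_abs,
        abs_of_nonneg (Set.indicator_nonneg (fun v _ => stdGauss_nonneg v) u)]
      exact Set.indicator_le_self' (fun v _ => stdGauss_nonneg v) u)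
    integrable_stdGauss
    (ae_of_all _ fun u => by
      have he : (fun a : ℝ => Set.indicator (Set.Ioi a) stdGauss u) =ᶠ[atTop]
          fun _ => (0 : ℝ) := by
        filter_upwards [eventually_ge_atTop u] with a ha
        exact Set.indicator_of_notMem (by simpa using ha) _
      exact Tendsto.congr' he.symm tendsto_const_nhds)
  have h' : Tendsto (fun a : ℝ => ∫ u, Set.indicator (Set.Ioi a) stdGauss u) atTop (𝓝 0) := by
    simpa using h
  exact h'.congr fun a => (key a).symm

lemma tendsto_Psi_atBot : Tendsto Psi atBot (𝓝 1) := by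
  have key : ∀ a : ℝ, Psi a = ∫ u, Set.indicator (Set.Ioi a) stdGauss u := by
    intro a
    rw [integral_indicator measurableSet_Ioi]
    rfl
  have h := MeasureTheory.tendsto_integral_filter_of_dominated_convergence
    (μ := volume) (l := (atBot : Filter ℝ))
    (F := fun a u => Set.indicator (Set.Ioi a) stdGauss u)
    (f := stdGauss) (bound := stdGauss)
    (Eventually.of_forall fun a =>
      continuous_stdGauss.aestronglyMeasurable.indicator measurableSet_Ioi)
    (Eventually.of_forall fun a => ae_of_all _ fun u => by
      rw [Real.norm_eq_abs,
        abs_of_nonneg (Set.indicator_nonneg (fun v _ => stdGauss_nonneg v) u)]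
      exact Set.indicator_le_self' (fun v _ => stdGauss_nonneg v) u)
    integrable_stdGauss
    (ae_of_all _ fun u => by
      have he : (fun a : ℝ => Set.indicator (Set.Ioi a) stdGauss u) =ᶠ[atBot]
          fun _ => stdGauss u := by
        filter_upwards [eventually_lt_atBot u] with a ha
        exact Set.indicator_of_mem (by simpa using ha) _
      exact Tendsto.congr' he.symm tendsto_const_nhds)
  rw [← integral_stdGauss]
  exact h.congr fun a => (key a).symm

lemma gaussDensity_eq {t : ℝ} (ht : 0 < t) (y : ℝ) :
    gaussDensity t y = stdGauss (y / Real.sqrt t) / Real.sqrt t := by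
  have hs : Real.sqrt (2 * Real.pi * t) = Real.sqrt (2 * Real.pi) * Real.sqrt t :=
    Real.sqrt_mul (by positivity) t
  have hy : (y / Real.sqrt t) ^ 2 = y ^ 2 / t := by
    rw [div_pow, Real.sq_sqrt ht.le]
  unfold gaussDensity stdGauss
  rw [hs, hy, div_div]
  congr 2
  ring

lemma gaussDensity_nonneg (t y : ℝ) : 0 ≤ gaussDensity t y := by
  unfold gaussDensity; positivity

lemma integral_Ioi_gaussDensity {t : ℝ} (ht : 0 < t) (x : ℝ) :
    ∫ y in Set.Ioi x, gaussDensity t y = Psi (x / Real.sqrt t) := by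
  have hst : 0 < Real.sqrt t := Real.sqrt_pos.mpr ht
  have h1 : ∀ y ∈ Set.Ioi x,
      gaussDensity t y = stdGauss (y * (Real.sqrt t)⁻¹) * (Real.sqrt t)⁻¹ := by
    intro y _
    rw [gaussDensity_eq ht, div_eq_mul_inv, div_eq_mul_inv]
  rw [setIntegral_congr_fun measurableSet_Ioi h1, integral_mul_const,
    MeasureTheory.integral_comp_mul_right_Ioi stdGauss x (inv_pos.mpr hst)]
  rw [smul_eq_mul, inv_inv]
  have : x * (Real.sqrt t)⁻¹ = x / Real.sqrt t := (div_eq_mul_inv _ _).symm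
  rw [this]
  field_simp [Psi]
  rfl

lemma integrable_mul_gaussDensity {t : ℝ} (ht : 0 < t) :
    Integrable (fun y => y * gaussDensity t y) := by
  have h : (fun y => y * gaussDensity t y) =
      fun y => (y * Real.exp (-(2 * t)⁻¹ * y ^ 2)) / Real.sqrt (2 * Real.pi * t) := by
    funext y
    unfold gaussDensity
    rw [neg_div, div_eq_mul_inv (y ^ 2), neg_mul, mul_comm (y ^ 2)]
    ring
  rw [h]
  exact (integrable_mul_exp_neg_mul_sq (by positivity)).div_const _

lemma tendsto_gaussDensity_atTop {t : ℝ} (ht : 0 < t) :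
    Tendsto (fun y => gaussDensity t y) atTop (𝓝 0) := by
  have h1 : Tendsto (fun y : ℝ => -(y ^ 2) / (2 * t)) atTop atBot := by
    have h2 : Tendsto (fun y : ℝ => y ^ 2) atTop atTop := tendsto_pow_atTop two_ne_zero
    have h3 := h2.const_mul_atTop_of_neg (r := -(2 * t)⁻¹) (neg_lt_zero.mpr (by positivity))
    refine h3.congr fun y => ?_
    field_simp
  have h4 : Tendsto (fun y : ℝ => Real.exp (-(y ^ 2) / (2 * t))) atTop (𝓝 0) :=
    Real.tendsto_exp_atBot.comp h1
  have h5 := h4.div_const (Real.sqrt (2 * Real.pi * t))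
  simpa [gaussDensity] using h5

lemma integral_Ioi_mul_gaussDensity {t : ℝ} (ht : 0 < t) (x : ℝ) :
    ∫ y in Set.Ioi x, y * gaussDensity t y = t * gaussDensity t x := by
  have hderiv : ∀ y ∈ Set.Ici x,
      HasDerivAt (fun y => -t * gaussDensity t y) (y * gaussDensity t y) y := by
    intro y _
    have h1 : HasDerivAt (fun y : ℝ => -(y ^ 2) / (2 * t)) (-y / t) y := by
      have h := ((hasDerivAt_pow 2 y).neg).div_const (2 * t)
      refine h.congr_deriv ?_
      field_simp
      ring
    have h2 := (h1.exp.div_const (Real.sqrt (2 * Real.pi * t))).const_mul (-t)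
    have h3 : y * gaussDensity t y =
        -t * (Real.exp (-(y ^ 2) / (2 * t)) * (-y / t) / Real.sqrt (2 * Real.pi * t)) := by
      unfold gaussDensity
      field_simp
    rw [h3]
    exact h2
  have hint : IntegrableOn (fun y => y * gaussDensity t y) (Set.Ioi x) :=
    (integrable_mul_gaussDensity ht).integrableOn
  have htend : Tendsto (fun y => -t * gaussDensity t y) atTop (𝓝 0) := by
    have := (tendsto_gaussDensity_atTop ht).const_mul (-t)
    simpa using this
  have h := MeasureTheory.integral_Ioi_of_hasDerivAt_of_tendsto' hderiv hint htend
  rw [h]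
  ring

lemma part1 (x : ℝ) {T : ℝ} (hT : 0 < T) :
    (∫ y : ℝ, max (y - x) 0 ∂(gaussianReal 0 T.toNNReal)) =
      T * gaussDensity T x - x * Psi (x / Real.sqrt T) := by
  have hv : T.toNNReal ≠ 0 := by
    simp [Real.toNNReal_eq_zero, not_le, hT]
  have hpdf : ∀ y, gaussianPDFReal 0 T.toNNReal y = gaussDensity T y := by
    intro y
    unfold gaussianPDFReal gaussDensity
    rw [Real.coe_toNNReal _ hT.le, sub_zero, inv_mul_eq_div]
  -- rewrite the gaussian integral as a Lebesgue integral against the density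
  have hmeas : Measurable fun y => (gaussianPDFReal 0 T.toNNReal y).toNNReal :=
    (measurable_gaussianPDFReal 0 T.toNNReal).real_toNNReal
  have hrw : (∫ y : ℝ, max (y - x) 0 ∂(gaussianReal 0 T.toNNReal)) =
      ∫ y : ℝ, max (y - x) 0 * gaussDensity T y := by
    rw [gaussianReal_of_var_ne_zero 0 hv]
    have : gaussianPDF 0 T.toNNReal =
        fun y => ((gaussianPDFReal 0 T.toNNReal y).toNNReal : ENNReal) := by
      funext y
      rfl
    rw [this, integral_withDensity_eq_integral_smul hmeas]
    congr 1
    funext y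
    rw [NNReal.smul_def, smul_eq_mul,
      Real.coe_toNNReal _ (gaussianPDFReal_nonneg 0 T.toNNReal y), hpdf, mul_comm]
  rw [hrw]
  -- integrability
  have hIntBig : Integrable (fun y => max (y - x) 0 * gaussDensity T y) := by
    have hg : Integrable (fun y => |x| * gaussDensity T y + |y * gaussDensity T y|) := by
      have h1 : Integrable (fun y => gaussDensity T y) := by
        have := integrable_gaussianPDFReal 0 T.toNNReal
        refine this.congr (ae_of_all _ fun y => ?_)
        rw [hpdf]
      exact (h1.const_mul _).add (integrable_mul_gaussDensity hT).abs
    refine hg.mono' ?_ (ae_of_all _ fun y => ?_)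
    · exact (((continuous_id.sub continuous_const).max continuous_const).mul
        (by
          unfold gaussDensity
          exact (Real.continuous_exp.comp (by continuity)).div_const _)).aestronglyMeasurable
    · rw [Real.norm_eq_abs, abs_mul, abs_of_nonneg (le_max_right _ _),
        abs_of_nonneg (gaussDensity_nonneg T y)]
      have hmax : max (y - x) 0 ≤ |x| + |y| := by
        rcases le_total (y - x) 0 with h | h
        · rw [max_eq_right h]; positivity
        · rw [max_eq_left h]
          have := abs_sub_abs_le_abs_sub y x
          calc y - x ≤ |y - x| := le_abs_self _
            _ ≤ |y| + |x| := abs_sub _ _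
            _ = |x| + |y| := by ring
      calc max (y - x) 0 * gaussDensity T y ≤ (|x| + |y|) * gaussDensity T y := by
            exact mul_le_mul_of_nonneg_right hmax (gaussDensity_nonneg T y)
        _ = |x| * gaussDensity T y + |y| * gaussDensity T y := by ring
        _ ≤ |x| * gaussDensity T y + |y * gaussDensity T y| := by
            rw [abs_mul, abs_of_nonneg (gaussDensity_nonneg T y)]
  -- split the integral at x
  have hsplit := MeasureTheory.integral_add_compl (measurableSet_Iic (a := x)) hIntBig
  rw [compl_Iic] at hsplit
  have hIic : ∫ y in Set.Iic x, max (y - x) 0 * gaussDensity T y = 0 := by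
    rw [setIntegral_congr_fun measurableSet_Iic
      (g := fun _ => (0 : ℝ)) (fun y hy => by
        rw [max_eq_right (sub_nonpos.mpr (Set.mem_Iic.mp hy)), zero_mul])]
    simp
  have hIoi : ∫ y in Set.Ioi x, max (y - x) 0 * gaussDensity T y =
      T * gaussDensity T x - x * Psi (x / Real.sqrt T) := by
    have h1 : ∀ y ∈ Set.Ioi x, max (y - x) 0 * gaussDensity T y =
        y * gaussDensity T y - x * gaussDensity T y := by
      intro y hy
      rw [max_eq_left (by simp at hy; linarith)]
      ring
    rw [setIntegral_congr_fun measurableSet_Ioi h1, integral_sub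
      (integrable_mul_gaussDensity hT).integrableOn
      (by
        have h2 : Integrable (fun y => x * gaussDensity T y) := by
          refine Integrable.const_mul ?_ x
          have := integrable_gaussianPDFReal 0 T.toNNReal
          refine this.congr (ae_of_all _ fun y => by rw [hpdf])
        exact h2.integrableOn)]
    rw [integral_Ioi_mul_gaussDensity hT x]
    rw [integral_const_mul, integral_Ioi_gaussDensity hT x]
  linarith [hsplit, hIic, hIoi]

/-- Auxiliary primitive. -/
noncomputable def Hfun (x t : ℝ) : ℝ :=
  2 * (t * gaussDensity t x - x * Psi (x / Real.sqrt t))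

lemma hasDerivAt_Hfun (x : ℝ) {t : ℝ} (ht : 0 < t) :
    HasDerivAt (Hfun x) (gaussDensity t x) t := by
  have hs : 0 < Real.sqrt t := Real.sqrt_pos.mpr ht
  have hss : Real.sqrt t * Real.sqrt t = t := Real.mul_self_sqrt ht.le
  have hsq : HasDerivAt Real.sqrt (1 / (2 * Real.sqrt t)) t := Real.hasDerivAt_sqrt ht.ne'
  have hainv : HasDerivAt (fun s : ℝ => (Real.sqrt s)⁻¹)
      (-(1 / (2 * Real.sqrt t)) / (Real.sqrt t) ^ 2) t := hsq.inv hs.ne'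
  have ha : HasDerivAt (fun s : ℝ => x * (Real.sqrt s)⁻¹)
      (x * (-(1 / (2 * Real.sqrt t)) / (Real.sqrt t) ^ 2)) t := hainv.const_mul x
  set a' := x * (-(1 / (2 * Real.sqrt t)) / (Real.sqrt t) ^ 2) with ha'def
  set a := x * (Real.sqrt t)⁻¹ with hadef
  have hphi : HasDerivAt (fun s : ℝ => stdGauss (x * (Real.sqrt s)⁻¹))
      ((-a * stdGauss a) * a') t := by have := (hasDerivAt_stdGauss a).comp t ha; exact this
  have hPsi : HasDerivAt (fun s : ℝ => Psi (x * (Real.sqrt s)⁻¹))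
      ((-stdGauss a) * a') t := by have := (hasDerivAt_Psi a).comp t ha; exact this
  have h1 : HasDerivAt (fun s : ℝ => Real.sqrt s * stdGauss (x * (Real.sqrt s)⁻¹))
      ((1 / (2 * Real.sqrt t)) * stdGauss a + Real.sqrt t * ((-a * stdGauss a) * a')) t :=
    hsq.mul hphi
  have h2 : HasDerivAt (fun s : ℝ => x * Psi (x * (Real.sqrt s)⁻¹))
      (x * ((-stdGauss a) * a')) t := hPsi.const_mul x
  have h3 := (h1.sub h2).const_mul 2
  have heq : (fun s : ℝ => 2 * (Real.sqrt s * stdGauss (x * (Real.sqrt s)⁻¹)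
      - x * Psi (x * (Real.sqrt s)⁻¹))) =ᶠ[𝓝 t] Hfun x := by
    filter_upwards [Ioi_mem_nhds ht] with s hs'
    have hs'' : 0 < Real.sqrt s := Real.sqrt_pos.mpr hs'
    have hss' : Real.sqrt s * Real.sqrt s = s := Real.mul_self_sqrt hs'.le
    unfold Hfun
    rw [gaussDensity_eq hs', div_eq_mul_inv x (Real.sqrt s)]
    have key : s * (stdGauss (x * (Real.sqrt s)⁻¹) / Real.sqrt s) =
        Real.sqrt s * stdGauss (x * (Real.sqrt s)⁻¹) := by
      rw [mul_div_assoc']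
      rw [eq_comm, eq_div_iff hs''.ne']
      linear_combination stdGauss (x * (Real.sqrt s)⁻¹) * hss'
    rw [key]
  have h4 := HasDerivAt.congr_of_eventuallyEq h3 heq.symm
  refine h4.congr_deriv ?_
  rw [gaussDensity_eq ht, div_eq_mul_inv x (Real.sqrt t), ← hadef]
  rw [ha'def, hadef]
  field_simp
  ring

lemma tendsto_Hfun (x : ℝ) :
    Tendsto (Hfun x) (𝓝[>] (0:ℝ)) (𝓝 (2 * max (-x) 0)) := by
  have hsqrt : Tendsto (fun t : ℝ => Real.sqrt t) (𝓝[>] (0:ℝ)) (𝓝 0) := by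
    have := (Real.continuous_sqrt.tendsto 0).mono_left (nhdsWithin_le_nhds (s := Set.Ioi 0))
    simpa using this
  -- first term tends to 0
  have h1 : Tendsto (fun t : ℝ => Real.sqrt t * stdGauss (x / Real.sqrt t))
      (𝓝[>] (0:ℝ)) (𝓝 0) := by
    have hb : Tendsto (fun t : ℝ => Real.sqrt t * (Real.sqrt (2 * Real.pi))⁻¹)
        (𝓝[>] (0:ℝ)) (𝓝 0) := by
      have := hsqrt.mul_const (Real.sqrt (2 * Real.pi))⁻¹
      simpa using this
    refine squeeze_zero' (Eventually.of_forall fun t =>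
      mul_nonneg (Real.sqrt_nonneg t) (stdGauss_nonneg _))
      (Eventually.of_forall fun t => ?_) hb
    exact mul_le_mul_of_nonneg_left (stdGauss_le _) (Real.sqrt_nonneg t)
  -- second term tends to -max(-x) 0
  have h2 : Tendsto (fun t : ℝ => x * Psi (x / Real.sqrt t))
      (𝓝[>] (0:ℝ)) (𝓝 (-max (-x) 0)) := by
    have hinv : Tendsto (fun t : ℝ => (Real.sqrt t)⁻¹) (𝓝[>] (0:ℝ)) atTop := by
      apply tendsto_inv_nhdsGT_zero.comp
      rw [tendsto_nhdsWithin_iff]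
      refine ⟨hsqrt, ?_⟩
      filter_upwards [self_mem_nhdsWithin] with t ht
      exact Real.sqrt_pos.mpr ht
    rcases lt_trichotomy x 0 with hx | hx | hx
    · have hbot : Tendsto (fun t : ℝ => x / Real.sqrt t) (𝓝[>] (0:ℝ)) atBot := by
        have := hinv.const_mul_atTop_of_neg hx
        refine this.congr fun t => (div_eq_mul_inv _ _).symm
      have := (tendsto_Psi_atBot.comp hbot).const_mul x
      rw [mul_one] at this
      convert this using 2
      · rfl
      rw [max_eq_left (by linarith)]
      ring
    · subst hx
      simp only [zero_mul, neg_zero, max_self]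
      simpa using tendsto_const_nhds (x := (0:ℝ)) (f := 𝓝[>] (0:ℝ))
    · have htop : Tendsto (fun t : ℝ => x / Real.sqrt t) (𝓝[>] (0:ℝ)) atTop := by
        have := hinv.const_mul_atTop hx
        refine this.congr fun t => (div_eq_mul_inv _ _).symm
      have := (tendsto_Psi_atTop.comp htop).const_mul x
      rw [mul_zero] at this
      convert this using 2
      · rfl
      rw [max_eq_right (by linarith)]
      ring
  have h3 := (h1.sub h2).const_mul 2
  have heq : (fun t : ℝ => 2 * (Real.sqrt t * stdGauss (x / Real.sqrt t)
      - x * Psi (x / Real.sqrt t))) =ᶠ[𝓝[>] (0:ℝ)] Hfun x := by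
    filter_upwards [self_mem_nhdsWithin] with t ht
    have ht' : (0:ℝ) < t := ht
    have hs : 0 < Real.sqrt t := Real.sqrt_pos.mpr ht'
    have hss : Real.sqrt t * Real.sqrt t = t := Real.mul_self_sqrt ht'.le
    unfold Hfun
    rw [gaussDensity_eq ht']
    have key : t * (stdGauss (x / Real.sqrt t) / Real.sqrt t) =
        Real.sqrt t * stdGauss (x / Real.sqrt t) := by
      rw [mul_div_assoc', eq_comm, eq_div_iff hs.ne']
      linear_combination stdGauss (x / Real.sqrt t) * hss
    rw [key]
  have h4 := Tendsto.congr' heq h3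
  convert h4 using 2
  ring

lemma integrableOn_gaussDensity_time (x : ℝ) {T : ℝ} (hT : 0 < T) :
    IntegrableOn (fun t => gaussDensity t x) (Set.Ioc 0 T) := by
  have hbound : IntegrableOn (fun t : ℝ => (Real.sqrt (2 * Real.pi))⁻¹ * t ^ (-(1/2) : ℝ))
      (Set.Ioc 0 T) := by
    have h := intervalIntegral.intervalIntegrable_rpow' (a := 0) (b := T)
      (r := -(1/2)) (by norm_num)
    rw [intervalIntegrable_iff_integrableOn_Ioc_of_le hT.le] at h
    exact h.const_mul _
  refine hbound.mono' ?_ ?_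
  · apply Measurable.aestronglyMeasurable
    apply Measurable.div
    · exact Real.measurable_exp.comp (measurable_const.div (measurable_const.mul measurable_id))
    · exact Real.continuous_sqrt.measurable.comp (measurable_const.mul measurable_id)
  · filter_upwards [ae_restrict_mem measurableSet_Ioc] with t ht
    have ht0 : 0 < t := ht.1
    rw [Real.norm_eq_abs, abs_of_nonneg (gaussDensity_nonneg t x)]
    unfold gaussDensity
    rw [Real.sqrt_mul (by positivity) t]
    have h2 : t ^ (-(1/2) : ℝ) = (Real.sqrt t)⁻¹ := by
      rw [Real.rpow_neg ht0.le, Real.sqrt_eq_rpow]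
    rw [h2]
    have hexp : Real.exp (-(x ^ 2) / (2 * t)) ≤ 1 :=
      Real.exp_le_one_iff.mpr
        (div_nonpos_of_nonpos_of_nonneg (neg_nonpos.mpr (sq_nonneg x)) (by positivity))
    calc Real.exp (-(x ^ 2) / (2 * t)) / (Real.sqrt (2 * Real.pi) * Real.sqrt t)
        ≤ 1 / (Real.sqrt (2 * Real.pi) * Real.sqrt t) := by
          gcongr
      _ = (Real.sqrt (2 * Real.pi))⁻¹ * (Real.sqrt t)⁻¹ := by
          rw [one_div, mul_inv]

/-- The Carr–Jarrow/Klebaner identity for Brownian motion: since `B_T ~ N(0, T)`,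
`E[(B_T − x)⁺] = (−x)⁺ + (1/2) ∫₀^T f_t(x) dt`. -/
theorem carrJarrow_bm (x : ℝ) {T : ℝ} (hT : 0 < T) :
    (∫ y : ℝ, max (y - x) 0 ∂(gaussianReal 0 T.toNNReal)) =
      max (-x) 0 + (1 / 2) * ∫ t in Set.Ioc (0 : ℝ) T, gaussDensity t x := by
  have hint : IntegrableOn (fun t => gaussDensity t x) (Set.Ioc 0 T) :=
    integrableOn_gaussDensity_time x hT
  have hIccInt : IntegrableOn (fun t => gaussDensity t x) (Set.Icc 0 T) := by
    rwa [integrableOn_Icc_iff_integrableOn_Ioc]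
  -- the primitive F u := ∫_{Ioc 0 u} gaussDensity t x dt is continuous on [0, T]
  have hFcont : ContinuousOn (fun u => ∫ t in Set.Ioc 0 u, gaussDensity t x) (Set.Icc 0 T) :=
    intervalIntegral.continuousOn_primitive hIccInt
  have hl : 𝓝[Set.Ioo (0:ℝ) T] (0:ℝ) = 𝓝[>] (0:ℝ) := nhdsWithin_Ioo_eq_nhdsGT hT
  -- limit of F at 0+
  have hF0 : Tendsto (fun u => ∫ t in Set.Ioc 0 u, gaussDensity t x)
      (𝓝[>] (0:ℝ)) (𝓝 0) := by
    have h := (hFcont 0 ⟨le_rfl, hT.le⟩).mono_left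
      (nhdsWithin_mono 0 (Set.Ioo_subset_Icc_self : Set.Ioo (0:ℝ) T ⊆ Set.Icc 0 T))
    rw [hl] at h
    simpa using h
  -- FTC on [ε, T]
  have hFTC : ∀ᶠ ε in 𝓝[>] (0:ℝ),
      (∫ t in Set.Ioc 0 T, gaussDensity t x) - ∫ t in Set.Ioc 0 ε, gaussDensity t x
        = Hfun x T - Hfun x ε := by
    rw [← hl]
    filter_upwards [self_mem_nhdsWithin] with ε hε
    have hε0 : 0 < ε := hε.1
    have hεT : ε ≤ T := hε.2.le
    have hii : IntervalIntegrable (fun t => gaussDensity t x) volume ε T := by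
      rw [intervalIntegrable_iff_integrableOn_Ioc_of_le hεT]
      exact hint.mono_set (Set.Ioc_subset_Ioc hε0.le le_rfl)
    have hFTC1 : ∫ t in ε..T, gaussDensity t x = Hfun x T - Hfun x ε := by
      refine intervalIntegral.integral_eq_sub_of_hasDerivAt (fun t ht => ?_) hii
      rw [Set.uIcc_of_le hεT] at ht
      exact hasDerivAt_Hfun x (lt_of_lt_of_le hε0 ht.1)
    have hadd : (∫ t in Set.Ioc 0 ε, gaussDensity t x)
        + ∫ t in Set.Ioc ε T, gaussDensity t x = ∫ t in Set.Ioc 0 T, gaussDensity t x := by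
      rw [← setIntegral_union (Set.Ioc_disjoint_Ioc_of_le le_rfl) measurableSet_Ioc
        (hint.mono_set (Set.Ioc_subset_Ioc le_rfl hεT))
        (hint.mono_set (Set.Ioc_subset_Ioc hε0.le le_rfl)),
        Set.Ioc_union_Ioc_eq_Ioc hε0.le hεT]
    rw [intervalIntegral.integral_of_le hεT] at hFTC1
    linarith [hFTC1, hadd]
  -- take limits
  have hlhs : Tendsto (fun ε => (∫ t in Set.Ioc 0 T, gaussDensity t x)
      - ∫ t in Set.Ioc 0 ε, gaussDensity t x) (𝓝[>] (0:ℝ))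
      (𝓝 ((∫ t in Set.Ioc 0 T, gaussDensity t x) - 0)) :=
    tendsto_const_nhds.sub hF0
  have hrhs : Tendsto (fun ε => Hfun x T - Hfun x ε) (𝓝[>] (0:ℝ))
      (𝓝 (Hfun x T - 2 * max (-x) 0)) :=
    tendsto_const_nhds.sub (tendsto_Hfun x)
  have hunique : (∫ t in Set.Ioc 0 T, gaussDensity t x) - 0
      = Hfun x T - 2 * max (-x) 0 :=
    tendsto_nhds_unique (hlhs.congr' hFTC) hrhs
  rw [part1 x hT]
  unfold Hfun at hunique
  linarith [hunique]
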